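/- Let φ be a continuous flow on a compact metric space (X,d). Then there exists an at most countable collection {B_n} of strongly stable sets such that SCR_d(φ) = ⋂_n (B_n ∪ B_n•). -/

import Mathlib

open Set Metric Topology MeasureTheory

/-- A continuous flow on `X`: jointly continuous, `φ 0 = id`, group property. -/
def IsFlow {X : Type*} [TopologicalSpace X] (φ : ℝ → X → X) : Prop :=
  Continuous (fun p : X × ℝ => φ p.2 p.1) ∧ (∀ x, φ 0 x = x) ∧
    ∀ s t x, φ (s + t) x = φ s (φ t x)

/-- Forward invariance of a set under the flow. -/
def FwdInvariant {X : Type*} (φ : ℝ → X → X) (S : Set X) : Prop :=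
  ∀ t, 0 ≤ t → ∀ x ∈ S, φ t x ∈ S

/-- The omega-limit set of a point. -/
def omegaPt {X : Type*} [TopologicalSpace X] (φ : ℝ → X → X) (x : X) : Set X :=
  ⋂ T : ℝ, closure {y | ∃ t, T ≤ t ∧ φ t x = y}

/-- The omega-limit set of a set. -/
def omegaSet {X : Type*} [TopologicalSpace X] (φ : ℝ → X → X) (U : Set X) : Set X :=
  ⋂ T : ℝ, closure {y | ∃ t, T ≤ t ∧ ∃ u ∈ U, φ t u = y}

/-- The complementary set `B• = {x : ω(x) ∩ B = ∅}`. -/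
def bulletSet {X : Type*} [TopologicalSpace X] (φ : ℝ → X → X) (B : Set X) : Set X :=
  {x | omegaPt φ x ∩ B = ∅}

/-- A closed set is stable if it has a neighborhood base of forward invariant sets. -/
def IsStable {X : Type*} [TopologicalSpace X] (φ : ℝ → X → X) (B : Set X) : Prop :=
  IsClosed B ∧ ∀ N ∈ nhdsSet B, ∃ V ∈ nhdsSet B, FwdInvariant φ V ∧ V ⊆ N

/-- A strongly stable set, via a family of closed nested neighborhoods `U η`, `η ∈ (0,1)`,
and times `T η` bounded on compact subsets of `(0,1)`. -/
def StronglyStable {X : Type*} [MetricSpace X] (φ : ℝ → X → X) (B : Set X) : Prop :=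
  IsClosed B ∧ ∃ (U : ℝ → Set X) (T : ℝ → ℝ),
    (∀ η ∈ Ioo (0:ℝ) 1, IsClosed (U η) ∧ B ⊆ interior (U η)) ∧
    (∀ η lam, η ∈ Ioo (0:ℝ) 1 → lam ∈ Ioo (0:ℝ) 1 → η < lam → U η ⊆ U lam) ∧
    (∀ η lam, η ∈ Ioo (0:ℝ) 1 → lam ∈ Ioo (0:ℝ) 1 → η < lam →
      {x | infDist x (U η) < lam - η} ⊆ U lam) ∧
    (B = ⋂ η ∈ Ioo (0:ℝ) 1, omegaSet φ (U η)) ∧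
    (∀ η ∈ Ioo (0:ℝ) 1, 0 < T η) ∧
    (∀ K, K ⊆ Ioo (0:ℝ) 1 → IsCompact K → Bornology.IsBounded (T '' K)) ∧
    ∀ η ∈ Ioo (0:ℝ) 1, closure {y | ∃ t, T η ≤ t ∧ ∃ u ∈ U η, φ t u = y} ⊆ U η

/-- A strong `(ε,T)`-chain from `x` to `y`. -/
def StrongChain {X : Type*} [MetricSpace X] (φ : ℝ → X → X) (ε T : ℝ) (x y : X) : Prop :=
  ∃ (n : ℕ) (xs : ℕ → X) (ts : ℕ → ℝ), xs 0 = x ∧ xs (n + 1) = y ∧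
    (∀ i ≤ n, T ≤ ts i) ∧
    ∑ i ∈ Finset.range (n + 1), dist (φ (ts i) (xs i)) (xs (i + 1)) < ε

/-- The strong chain recurrent set. -/
def SCR {X : Type*} [MetricSpace X] (φ : ℝ → X → X) : Set X :=
  {x | ∀ ε > 0, ∀ T > 0, StrongChain φ ε T x x}

/-- `Ω(Y,ε,T)`: points reachable from `Y` by a strong `(ε,T)`-chain. -/
def OmegaChain {X : Type*} [MetricSpace X] (φ : ℝ → X → X) (Y : Set X) (ε T : ℝ) : Set X :=
  {y | ∃ x ∈ Y, StrongChain φ ε T x y}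

/-- `Ω̄(Y,ε,T) = ⋂_{η>0} Ω(Y,ε+η,T)`. -/
def OmegaBar {X : Type*} [MetricSpace X] (φ : ℝ → X → X) (Y : Set X) (ε T : ℝ) : Set X :=
  ⋂ η ∈ Ioi (0:ℝ), OmegaChain φ Y (ε + η) T


section Chains
variable {X : Type*} [MetricSpace X] (φ : ℝ → X → X)

lemma strongChain_mono {ε ε' T : ℝ} {x y : X} (h : StrongChain φ ε T x y) (hε : ε ≤ ε') :
    StrongChain φ ε' T x y := by
  obtain ⟨n, xs, ts, h1, h2, h3, h4⟩ := h
  exact ⟨n, xs, ts, h1, h2, h3, h4.trans_le hε⟩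

lemma strongChain_endpoint {ε T : ℝ} {x y y' : X} (h : StrongChain φ ε T x y) :
    StrongChain φ (ε + dist y y') T x y' := by
  classical
  obtain ⟨n, xs, ts, h1, h2, h3, h4⟩ := h
  refine ⟨n, fun k => if k = n + 1 then y' else xs k, ts, by simp [h1], by simp, h3, ?_⟩
  beta_reduce
  rw [Finset.sum_range_succ]
  have e1 : ∀ i ∈ Finset.range n,
      dist (φ (ts i) (if i = n + 1 then y' else xs i)) (if i + 1 = n + 1 then y' else xs (i + 1))
        = dist (φ (ts i) (xs i)) (xs (i + 1)) := by
    intro i hi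
    rw [Finset.mem_range] at hi
    rw [if_neg (by omega), if_neg (by omega)]
  rw [Finset.sum_congr rfl e1]
  have e2 : (if n = n + 1 then y' else xs n) = xs n := if_neg (by omega)
  rw [e2, if_pos rfl]
  have tri : dist (φ (ts n) (xs n)) y' ≤ dist (φ (ts n) (xs n)) (xs (n + 1)) + dist y y' := by
    rw [← h2]; exact dist_triangle _ _ _
  have h4' := h4
  rw [Finset.sum_range_succ] at h4'
  linarith

lemma strongChain_prepend {ε T s : ℝ} {x y : X} (hs : T ≤ s)
    (h : StrongChain φ ε T (φ s x) y) : StrongChain φ ε T x y := by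
  obtain ⟨n, xs, ts, h1, h2, h3, h4⟩ := h
  refine ⟨n + 1, fun k => Nat.casesOn k x xs, fun k => Nat.casesOn k s ts, rfl, h2, ?_, ?_⟩
  · intro i hi
    cases i with
    | zero => exact hs
    | succ j => exact h3 j (by omega)
  · rw [Finset.sum_range_succ']
    simp only []
    have e0 : dist (φ s x) (xs 0) = 0 := by rw [h1, dist_self]
    calc (∑ k ∈ Finset.range (n + 1), dist (φ (ts k) (xs k)) (xs (k + 1)))
          + dist (φ s x) (xs 0) < ε + 0 := by rw [e0]; simpa using h4
      _ = ε := by ring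

lemma strongChain_append {ε T s : ℝ} {x y : X} (h : StrongChain φ ε T x y) (hs : T ≤ s) :
    StrongChain φ ε T x (φ s y) := by
  classical
  obtain ⟨n, xs, ts, h1, h2, h3, h4⟩ := h
  refine ⟨n + 1, fun k => if k = n + 2 then φ s y else xs k,
    fun k => if k = n + 1 then s else ts k, by simp [h1], by simp, ?_, ?_⟩
  · intro i hi
    beta_reduce
    by_cases hc : i = n + 1
    · rw [if_pos hc]; exact hs
    · rw [if_neg hc]; exact h3 i (by omega)
  · beta_reduce
    rw [Finset.sum_range_succ]
    have e1 : ∀ i ∈ Finset.range (n + 1),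
        dist (φ (if i = n + 1 then s else ts i) (if i = n + 2 then φ s y else xs i))
          (if i + 1 = n + 2 then φ s y else xs (i + 1))
          = dist (φ (ts i) (xs i)) (xs (i + 1)) := by
      intro i hi
      rw [Finset.mem_range] at hi
      rw [if_neg (by omega), if_neg (by omega), if_neg (by omega)]
    rw [Finset.sum_congr rfl e1]
    rw [if_pos rfl, if_neg (by omega), if_pos rfl, h2, dist_self]
    simpa using h4

lemma strongChain_of_dist {ε T s : ℝ} {x z : X} (hs : T ≤ s) (hd : dist (φ s x) z < ε) :
    StrongChain φ ε T x z := by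
  classical
  refine ⟨0, fun k => if k = 0 then x else z, fun _ => s, by simp, by simp, fun i _ => hs, ?_⟩
  simpa using hd
end Chains


section OB
variable {X : Type*} [MetricSpace X] (φ : ℝ → X → X) {Y : Set X} {ε ε' T : ℝ}

lemma omegaChain_mono (h : ε ≤ ε') : OmegaChain φ Y ε T ⊆ OmegaChain φ Y ε' T := by
  rintro z ⟨u, hu, hc⟩
  exact ⟨u, hu, strongChain_mono φ hc h⟩

lemma mem_omegaBar {z : X} : z ∈ OmegaBar φ Y ε T ↔ ∀ η > 0, z ∈ OmegaChain φ Y (ε + η) T := by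
  simp [OmegaBar, mem_Ioi]

lemma omegaBar_mono (h : ε ≤ ε') : OmegaBar φ Y ε T ⊆ OmegaBar φ Y ε' T := by
  intro z hz
  rw [mem_omegaBar] at hz ⊢
  intro η hη
  exact omegaChain_mono φ (by linarith) (hz η hη)

lemma omegaBar_adjust {w z : X} {r : ℝ} (hw : w ∈ OmegaBar φ Y ε T) (h : dist w z ≤ r) :
    z ∈ OmegaBar φ Y (ε + r) T := by
  rw [mem_omegaBar] at hw ⊢
  intro η hη
  obtain ⟨u, hu, hc⟩ := hw η hη
  exact ⟨u, hu, strongChain_mono φ (strongChain_endpoint φ hc) (by linarith)⟩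

lemma isClosed_omegaBar : IsClosed (OmegaBar φ Y ε T) := by
  have he : OmegaBar φ Y ε T = ⋂ η ∈ Ioi (0:ℝ), closure (OmegaChain φ Y (ε + η) T) := by
    apply Subset.antisymm
    · intro z hz
      rw [mem_omegaBar] at hz
      exact mem_iInter₂.mpr fun η hη => subset_closure (hz η hη)
    · intro z hz
      rw [mem_omegaBar]
      intro η hη
      have h1 : z ∈ closure (OmegaChain φ Y (ε + η / 2) T) :=
        mem_iInter₂.mp hz (η / 2) (by simpa using half_pos hη)
      rw [Metric.mem_closure_iff] at h1
      obtain ⟨w, hw, hd⟩ := h1 (η / 2) (half_pos hη)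
      obtain ⟨u, hu, hc⟩ := hw
      refine ⟨u, hu, strongChain_mono φ (strongChain_endpoint φ hc) ?_⟩
      rw [dist_comm] at hd
      linarith
  rw [he]
  exact isClosed_biInter fun η _ => isClosed_closure

lemma omegaBar_absorb {u : X} {s : ℝ} (hs : T ≤ s) (hu : u ∈ OmegaBar φ Y ε T) :
    φ s u ∈ OmegaBar φ Y ε T := by
  rw [mem_omegaBar] at hu ⊢
  intro η hη
  obtain ⟨v, hv, hc⟩ := hu η hη
  exact ⟨v, hv, strongChain_append φ hc hs⟩

lemma omegaSet_omegaBar_subset : omegaSet φ (OmegaBar φ Y ε T) ⊆ OmegaBar φ Y ε T := by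
  intro z hz
  have h1 : z ∈ closure {y | ∃ t, T ≤ t ∧ ∃ u ∈ OmegaBar φ Y ε T, φ t u = y} :=
    mem_iInter.mp hz T
  refine (isClosed_omegaBar φ).closure_subset_iff.mpr ?_ h1
  rintro w ⟨t, ht, u, hu, rfl⟩
  exact omegaBar_absorb φ ht hu
end OB


section Main
variable {X : Type*} [MetricSpace X] (φ : ℝ → X → X) (y : X) (ε T : ℝ)

/-- Orbit segment from time `T` to `2T`. -/
def Yseg : Set X := (fun s => φ s y) '' Icc T (2 * T)

/-- The neighborhood family. -/
def Ufam (η : ℝ) : Set X := OmegaBar φ (Yseg φ y T) (ε / 2 + η) T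

/-- The strongly stable set associated to `(y, ε, T)`. -/
def Bset : Set X := ⋂ η ∈ Ioo (0:ℝ) 1, omegaSet φ (Ufam φ y ε T η)

variable {φ y ε T}
variable (hφ : IsFlow φ) (hε : 0 < ε) (hT : 0 < T)

section
include hφ

lemma flow_comp (a b : ℝ) (x : X) : φ a (φ b x) = φ (a + b) x := (hφ.2.2 a b x).symm

include hT

lemma mem_ufam_orbit {s η : ℝ} (hs : 2 * T ≤ s) (hη : 0 ≤ η) (hε : 0 < ε) :
    φ s y ∈ Ufam φ y ε T η := by
  rw [Ufam, mem_omegaBar]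
  intro θ hθ
  refine ⟨φ T y, ⟨T, ⟨le_refl T, by linarith⟩, rfl⟩, ?_⟩
  have he : φ (s - T) (φ T y) = φ s y := by
    rw [flow_comp hφ]; norm_num
  exact strongChain_of_dist φ (s := s - T) (by linarith) (by rw [he, dist_self]; positivity)
end

lemma ufam_mono {a b : ℝ} (h : a ≤ b) : Ufam φ y ε T a ⊆ Ufam φ y ε T b :=
  omegaBar_mono φ (by linarith)

lemma ufam_adjust {a r : ℝ} {w z : X} (hw : w ∈ Ufam φ y ε T a) (h : dist w z ≤ r) :
    z ∈ Ufam φ y ε T (a + r) := by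
  have := omegaBar_adjust φ hw h
  rw [Ufam, show ε / 2 + (a + r) = ε / 2 + a + r by ring]
  exact this

lemma ufam_absorb {a s : ℝ} {u : X} (hs : T ≤ s) (hu : u ∈ Ufam φ y ε T a) :
    φ s u ∈ Ufam φ y ε T a := omegaBar_absorb φ hs hu

include hφ in
lemma ufam_tail {a s : ℝ} {x : X} (hx : φ s x ∈ Ufam φ y ε T a) :
    ∀ t, s + T ≤ t → φ t x ∈ Ufam φ y ε T a := by
  intro t ht
  have he : φ t x = φ (t - s) (φ s x) := by rw [flow_comp hφ]; norm_num
  rw [he]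
  exact ufam_absorb (by linarith) hx

include hφ in
lemma omegaPt_subset_omegaSet {S : ℝ} {x : X} {V : Set X} (h : ∀ t, S ≤ t → φ t x ∈ V) :
    omegaPt φ x ⊆ omegaSet φ V := by
  intro p hp
  rw [omegaSet, mem_iInter]
  intro T'
  have h1 : p ∈ closure {w | ∃ s, S + T' ≤ s ∧ φ s x = w} := mem_iInter.mp hp (S + T')
  refine closure_mono ?_ h1
  rintro w ⟨s, hs, rfl⟩
  refine ⟨s - S, by linarith, φ S x, h S le_rfl, ?_⟩
  rw [flow_comp hφ]; norm_num

lemma bset_subset_omegaBar : Bset φ y ε T ⊆ Ufam φ y ε T 0 := by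
  intro z hz
  have hz' : ∀ η ∈ Ioo (0:ℝ) 1, z ∈ Ufam φ y ε T η := fun η hη =>
    omegaSet_omegaBar_subset φ (mem_iInter₂.mp hz η hη)
  rw [Ufam, mem_omegaBar]
  intro θ hθ
  set η := min (θ / 2) (1 / 2) with hηdef
  have hη : η ∈ Ioo (0:ℝ) 1 := by
    constructor
    · apply lt_min <;> linarith
    · exact lt_of_le_of_lt (min_le_right _ _) (by norm_num)
  have h1 : z ∈ Ufam φ y ε T η := hz' η hη
  have h2 : z ∈ OmegaChain φ (Yseg φ y T) (ε / 2 + η + θ / 2) T :=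
    (mem_omegaBar φ).mp h1 (θ / 2) (by linarith)
  refine omegaChain_mono φ ?_ h2
  have : η ≤ θ / 2 := min_le_left _ _
  linarith

include hφ hε hT in
lemma stronglyStable_bset : StronglyStable φ (Bset φ y ε T) := by
  have hne : ∀ η ∈ Ioo (0:ℝ) 1, (Ufam φ y ε T η).Nonempty := fun η hη =>
    ⟨φ (2 * T) y, mem_ufam_orbit hφ hT le_rfl hη.1.le hε⟩
  refine ⟨?_, Ufam φ y ε T, fun _ => T, ?_, ?_, ?_, rfl, fun _ _ => hT, ?_, ?_⟩
  · exact isClosed_biInter fun η _ => isClosed_iInter fun _ => isClosed_closure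
  · intro η hη
    refine ⟨isClosed_omegaBar φ, ?_⟩
    intro z hz
    have hz0 : z ∈ Ufam φ y ε T 0 := bset_subset_omegaBar hz
    rw [mem_interior]
    refine ⟨ball z η, ?_, isOpen_ball, mem_ball_self hη.1⟩
    intro w hw
    have : w ∈ Ufam φ y ε T (0 + η) := ufam_adjust hz0 (by rw [dist_comm]; exact (mem_ball.mp hw).le)
    rwa [zero_add] at this
  · exact fun η lam _ _ h => ufam_mono h.le
  · intro η lam hη hlam h z hz
    obtain ⟨w, hw, hd⟩ := (infDist_lt_iff (hne η hη)).mp hz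
    have : z ∈ Ufam φ y ε T (η + (lam - η)) := ufam_adjust hw (by rw [dist_comm]; exact hd.le)
    rwa [show η + (lam - η) = lam by ring] at this
  · intro K _ _
    refine Bornology.IsBounded.subset (Bornology.isBounded_singleton (x := T)) ?_
    rintro _ ⟨k, _, rfl⟩
    rfl
  · intro η hη
    refine closure_minimal ?_ (isClosed_omegaBar φ)
    rintro w ⟨t, ht, u, hu, rfl⟩
    exact ufam_absorb ht hu
end Main


section Main2
variable {X : Type*} [MetricSpace X] {φ : ℝ → X → X} {y : X} {ε T : ℝ}
variable (hφ : IsFlow φ) (hε : 0 < ε) (hT : 0 < T)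

include hφ hε hT in
set_option linter.unusedSectionVars false in
lemma scr_subset_union :
    SCR φ ⊆ Bset φ y ε T ∪ bulletSet φ (Bset φ y ε T) := by
  intro x hx
  by_cases hb : omegaPt φ x ∩ Bset φ y ε T = ∅
  · exact Or.inr hb
  · left
    obtain ⟨p, hp1, hp2⟩ := nonempty_iff_ne_empty.mpr hb
    rw [Bset, mem_iInter₂]
    intro η hη
    -- Step 1: find a time after which the orbit of x is trapped in `Ufam (η/2)`
    have hp0 : p ∈ Ufam φ y ε T 0 := bset_subset_omegaBar hp2
    have hpc : p ∈ closure {w | ∃ t, (0:ℝ) ≤ t ∧ φ t x = w} := mem_iInter.mp hp1 0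
    rw [Metric.mem_closure_iff] at hpc
    obtain ⟨w, ⟨s, hs0, rfl⟩, hdw⟩ := hpc (η / 2) (by linarith [hη.1])
    have hsU : φ s x ∈ Ufam φ y ε T (η / 2) := by
      have := ufam_adjust hp0 hdw.le
      rwa [zero_add] at this
    have htail : ∀ t, s + T ≤ t → φ t x ∈ Ufam φ y ε T (η / 2) := ufam_tail hφ hsU
    -- Step 2: chains
    rw [omegaSet, mem_iInter]
    intro T'
    rw [Metric.mem_closure_iff]
    intro θ hθ
    set ε' := min θ (η / 2) with hε'def
    have hε' : 0 < ε' := lt_min hθ (by linarith [hη.1])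
    set T₀ := max 1 (s + T + max T' 0 + T) with hT₀def
    have hT₀ : 0 < T₀ := lt_of_lt_of_le one_pos (le_max_left _ _)
    obtain ⟨n, xs, ts, c1, c2, c3, c4⟩ := hx ε' hε' T₀ hT₀
    set d : ℕ → ℝ := fun i => dist (φ (ts i) (xs i)) (xs (i + 1)) with hd
    have hdnn : ∀ i, 0 ≤ d i := fun i => dist_nonneg
    have hts : ∀ i ≤ n, s + T + max T' 0 + T ≤ ts i := fun i hi =>
      le_trans (le_max_right _ _) (c3 i hi)
    have hsumle : ∀ j, j ≤ n + 1 → ∑ i ∈ Finset.range j, d i ≤ ∑ i ∈ Finset.range (n + 1), d i := by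
      intro j hj
      exact Finset.sum_le_sum_of_subset_of_nonneg
        (Finset.range_subset_range.mpr hj) (fun i _ _ => hdnn i)
    have hsumtot : ∑ i ∈ Finset.range (n + 1), d i < ε' := c4
    have key : ∀ j, j ≤ n →
        xs (j + 1) ∈ Ufam φ y ε T (η / 2 + ∑ i ∈ Finset.range (j + 1), d i) := by
      intro j
      induction j with
      | zero =>
        intro _
        have h0 : φ (ts 0) x ∈ Ufam φ y ε T (η / 2) := by
          refine htail (ts 0) ?_
          have := hts 0 (by omega)
          have hm := le_max_right T' (0:ℝ)
          linarith
        rw [Finset.sum_range_one]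
        have h1 : φ (ts 0) (xs 0) ∈ Ufam φ y ε T (η / 2) := by rwa [c1]
        exact ufam_adjust h1 (le_refl (d 0))
      | succ m ih =>
        intro hm
        have h1 := ih (by omega)
        have h2 : φ (ts (m + 1)) (xs (m + 1)) ∈
            Ufam φ y ε T (η / 2 + ∑ i ∈ Finset.range (m + 1), d i) := by
          refine ufam_absorb ?_ h1
          have := hts (m + 1) hm
          have hm0 := le_max_right T' (0:ℝ)
          linarith
        have h3 := ufam_adjust h2 (le_refl (d (m + 1)))
        have he : η / 2 + ∑ i ∈ Finset.range (m + 1 + 1), d i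
            = η / 2 + ∑ i ∈ Finset.range (m + 1), d i + d (m + 1) := by
          rw [Finset.sum_range_succ]; ring
        rwa [he]
    -- the last chain point approximates x
    have hdn : dist x (φ (ts n) (xs n)) < θ := by
      have h1 : d n ≤ ∑ i ∈ Finset.range (n + 1), d i :=
        Finset.single_le_sum (fun i _ => hdnn i) (Finset.self_mem_range_succ n)
      have h2 : dist x (φ (ts n) (xs n)) = d n := by
        rw [hd]
        simp only []
        rw [← c2, dist_comm]
      rw [h2]
      have : ε' ≤ θ := min_le_left _ _
      linarith
    refine ⟨φ (ts n) (xs n), ?_, hdn⟩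
    show ∃ t, T' ≤ t ∧ ∃ u ∈ Ufam φ y ε T η, φ t u = φ (ts n) (xs n)
    have htsn := hts n le_rfl
    have hm0 := le_max_right T' (0:ℝ)
    have hmT' := le_max_left T' (0:ℝ)
    cases n with
    | zero =>
      refine ⟨T', le_rfl, φ (ts 0 - T') x, ?_, ?_⟩
      · refine ufam_mono (by linarith [hη.1] : η / 2 ≤ η) (htail (ts 0 - T') ?_)
        have := hts 0 le_rfl
        linarith
      · rw [flow_comp hφ, show T' + (ts 0 - T') = ts 0 by ring, ← c1]
    | succ m =>
      refine ⟨ts (m + 1), by linarith [hts (m + 1) le_rfl], xs (m + 1), ?_, rfl⟩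
      have h1 := key m (by omega)
      refine ufam_mono ?_ h1
      have h2 : ∑ i ∈ Finset.range (m + 1), d i < ε' := lt_of_le_of_lt (hsumle (m + 1) (by omega)) hsumtot
      have h3 : ε' ≤ η / 2 := min_le_right _ _
      linarith

lemma omegaPt_nonempty' [CompactSpace X] (φ : ℝ → X → X) (x : X) : (omegaPt φ x).Nonempty := by
  refine IsCompact.nonempty_iInter_of_directed_nonempty_isCompact_isClosed
    (fun S => closure {y | ∃ t, S ≤ t ∧ φ t x = y}) ?_ ?_
    (fun S => isClosed_closure.isCompact) (fun S => isClosed_closure)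
  · intro a b
    refine ⟨max a b, closure_mono ?_, closure_mono ?_⟩ <;>
      · rintro w ⟨t, ht, rfl⟩
        exact ⟨t, le_trans (by simp) ht, rfl⟩
  · intro S
    exact ⟨φ S x, subset_closure ⟨S, le_rfl, rfl⟩⟩

include hφ hε hT in
lemma exclusion [CompactSpace X] (hns : ¬ StrongChain φ ε T y y) :
    ∃ δ > 0, ∀ z, dist z y < δ → z ∉ Bset φ y ε T ∪ bulletSet φ (Bset φ y ε T) := by
  have hcont : Continuous fun z : X => φ (2 * T) z :=
    hφ.1.comp (continuous_id.prodMk continuous_const)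
  have hca : ContinuousAt (fun z : X => φ (2 * T) z) y := hcont.continuousAt
  rw [Metric.continuousAt_iff] at hca
  obtain ⟨δ₂, hδ₂, hδ₂p⟩ := hca (ε / 2) (by linarith)
  refine ⟨min (ε / 8) δ₂, lt_min (by linarith) hδ₂, ?_⟩
  rintro z hz (hzB | hzb)
  · -- z ∈ Bset : produces a strong (ε,T)-chain from y to y
    have h0 : z ∈ Ufam φ y ε T 0 := bset_subset_omegaBar hzB
    obtain ⟨u, hu, hc⟩ := (mem_omegaBar φ).mp h0 (ε / 8) (by linarith)
    obtain ⟨s, hs, rfl⟩ := hu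
    have hchain := strongChain_endpoint (y' := y) φ hc
    have hzy : dist z y < ε / 8 := lt_of_lt_of_le hz (min_le_left _ _)
    have : StrongChain φ ε T (φ s y) y :=
      strongChain_mono φ hchain (by linarith)
    exact hns (strongChain_prepend φ hs.1 this)
  · -- z ∈ bulletSet : but ω(z) ⊆ Bset and ω(z) ≠ ∅
    have h2T : φ (2 * T) z ∈ ⋂ η ∈ Ioo (0:ℝ) 1, Ufam φ y ε T η := by
      rw [mem_iInter₂]
      intro η hη
      rw [Ufam, mem_omegaBar]
      intro θ hθ
      refine ⟨φ T y, ⟨T, ⟨le_rfl, by linarith⟩, rfl⟩, ?_⟩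
      refine strongChain_of_dist φ (s := T) le_rfl ?_
      rw [flow_comp hφ, show T + T = 2 * T by ring]
      have := hδ₂p (lt_of_lt_of_le hz (min_le_right _ _))
      calc dist (φ (2 * T) y) (φ (2 * T) z) = dist (φ (2 * T) z) (φ (2 * T) y) := dist_comm _ _
        _ < ε / 2 := this
        _ < ε / 2 + η + θ := by linarith [hη.1]
    have homega : omegaPt φ z ⊆ Bset φ y ε T := by
      rw [Bset]
      refine subset_iInter₂ fun η hη => ?_
      refine omegaPt_subset_omegaSet hφ (S := 2 * T + T) (V := Ufam φ y ε T η) ?_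
      intro t ht
      exact ufam_tail hφ (mem_iInter₂.mp h2T η hη) t ht
    obtain ⟨q, hq⟩ := omegaPt_nonempty' φ z
    exact Set.eq_empty_iff_forall_notMem.mp hzb q ⟨hq, homega hq⟩
end Main2


theorem stmt14 {X : Type*} [MetricSpace X] [CompactSpace X] (φ : ℝ → X → X)
    (hφ : IsFlow φ) :
    ∃ 𝒮 : Set (Set X), 𝒮.Countable ∧ (∀ B ∈ 𝒮, StronglyStable φ B) ∧
      SCR φ = ⋂ B ∈ 𝒮, (B ∪ bulletSet φ B) := by
  classical
  set P : X × ℝ × ℝ → Prop := fun i => 0 < i.2.1 ∧ 0 < i.2.2 ∧ ¬ StrongChain φ i.2.1 i.2.2 i.1 i.1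
    with hP
  set Bs : X × ℝ × ℝ → Set X := fun i => Bset φ i.1 i.2.1 i.2.2 with hBs
  set G : X × ℝ × ℝ → Set X :=
    fun i => if P i then (closure (Bs i ∪ bulletSet φ (Bs i)))ᶜ else ∅ with hG
  have hGopen : ∀ i, IsOpen (G i) := by
    intro i
    by_cases h : P i
    · simp only [hG, if_pos h]
      exact isClosed_closure.isOpen_compl
    · simp only [hG, if_neg h]
      exact isOpen_empty
  obtain ⟨t, htc, htU⟩ := TopologicalSpace.isOpen_iUnion_countable G hGopen
  refine ⟨Bs '' {i ∈ t | P i}, ((htc.mono (sep_subset _ _)).image _), ?_, ?_⟩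
  · rintro B ⟨i, ⟨hit, hiP⟩, rfl⟩
    exact stronglyStable_bset hφ hiP.1 hiP.2.1
  · apply Subset.antisymm
    · intro x hx
      rw [mem_iInter₂]
      rintro B ⟨i, ⟨hit, hiP⟩, rfl⟩
      exact scr_subset_union hφ hiP.1 hiP.2.1 hx
    · intro x hx
      by_contra hxs
      have hmem : x ∈ ⋃ i, G i := by
        have hxs' : ∃ ε > 0, ∃ T > 0, ¬ StrongChain φ ε T x x := by
          by_contra h
          push_neg at h
          exact hxs fun ε hε T hT => h ε hε T hT
        obtain ⟨ε, hε, T, hT, hni⟩ := hxs'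
        refine mem_iUnion.mpr ⟨(x, ε, T), ?_⟩
        have hPi : P (x, ε, T) := ⟨hε, hT, hni⟩
        simp only [hG, if_pos hPi]
        obtain ⟨δ, hδ, hexc⟩ := exclusion hφ hε hT hni
        intro hcl
        have hsub : Bs (x, ε, T) ∪ bulletSet φ (Bs (x, ε, T)) ⊆ (ball x δ)ᶜ := by
          intro z hz
          intro hzball
          exact hexc z (mem_ball.mp hzball) hz
        have := closure_minimal hsub isOpen_ball.isClosed_compl hcl
        exact this (mem_ball_self hδ)
      rw [← htU] at hmem
      obtain ⟨i, hit, hxi⟩ := mem_iUnion₂.mp hmem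
      have hiP : P i := by
        by_contra h
        simp only [hG, if_neg h] at hxi
        exact hxi
      have hxB : x ∈ Bs i ∪ bulletSet φ (Bs i) :=
        mem_iInter₂.mp hx (Bs i) ⟨i, ⟨hit, hiP⟩, rfl⟩
      simp only [hG, if_pos hiP] at hxi
      exact hxi (subset_closure hxB)
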